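/- If G is a bi-directed graph whose skeleton contains, as an induced subgraph on four vertices {x, v, w, y}, either the path x↔v↔w↔y (with no other adjacencies among the four) or the four-cycle x↔v↔w↔y↔x (with v,y non-adjacent and x,w non-adjacent), then in every ancestral graph G̅ Markov equivalent to G with the same skeleton, the edge between v and w is bi-directed. -/

import Mathlib

/-- Possible edge types between an ordered pair of distinct vertices of a
simple mixed graph.  `arrowTo` at `(v, w)` means `v → w`, `arrowFrom` means
`v ← w`, `undir` means `v − w` and `bidir` means `v ↔ w`. -/
inductive EType : Type
  | none | undir | arrowTo | arrowFrom | bidir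
deriving DecidableEq

/-- The edge type seen from the reversed ordered pair of vertices. -/
def EType.mirror : EType → EType
  | .none => .none
  | .undir => .undir
  | .arrowTo => .arrowFrom
  | .arrowFrom => .arrowTo
  | .bidir => .bidir

/-- A simple mixed graph: at most one edge (undirected, directed or
bi-directed) between any two distinct vertices, and no self loops. -/
structure MixedGraph (V : Type) where
  E : V → V → EType
  no_loop : ∀ v, E v v = .none
  symm : ∀ v w, E w v = (E v w).mirror

/-- `(a, b, c)` are three consecutive vertices on the path `p`. -/
def ConsecTriple {V : Type} (p : List V) (a b c : V) : Prop :=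
  ∃ l1 l2, p = l1 ++ a :: b :: c :: l2

namespace MixedGraph

variable {V : Type} (G : MixedGraph V)

/-- `v − w` is an edge of `G`. -/
def Undir (v w : V) : Prop := G.E v w = .undir

/-- `v → w` is an edge of `G`. -/
def Dir (v w : V) : Prop := G.E v w = .arrowTo

/-- `v ↔ w` is an edge of `G`. -/
def Bidir (v w : V) : Prop := G.E v w = .bidir

/-- `v` and `w` are adjacent (joined by some edge). -/
def Adj (v w : V) : Prop := G.E v w ≠ .none

/-- The edge between `a` and `b` has an arrowhead at `b`. -/
def HeadAt (a b : V) : Prop := G.E a b = .arrowTo ∨ G.E a b = .bidir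

/-- Closed boundary: `v` together with its adjacent vertices. -/
def Bd (v : V) : Set V := insert v {w | G.Adj v w}

/-- A set of vertices is complete if all of its pairs of distinct
vertices are adjacent. -/
def Complete (S : Set V) : Prop := ∀ v ∈ S, ∀ w ∈ S, v ≠ w → G.Adj v w

/-- A vertex is simplicial if its closed boundary is complete. -/
def Simplicial (v : V) : Prop := G.Complete (G.Bd v)

/-- `v` is an ancestor of `w`: `v = w` or there is a directed path from
`v` to `w`. -/
def Anc (v w : V) : Prop := Relation.ReflTransGen G.Dir v w

/-- The set of ancestors of vertices in `C`. -/
def anSet (C : Set V) : Set V := {v | ∃ c ∈ C, G.Anc v c}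

/-- `G` is an ancestral graph. -/
def Ancestral : Prop :=
  (∀ v w, G.Dir v w → ¬ G.Anc w v) ∧
  (∀ v w, G.Undir v w → ∀ u, ¬ G.HeadAt u v) ∧
  (∀ v w, G.Bidir v w → ¬ G.Anc v w)

/-- The boundary containment property. -/
def BdContain : Prop :=
  (∀ v w, G.Undir v w → G.Bd v = G.Bd w) ∧
  (∀ v w, G.Dir v w → G.Bd v ⊆ G.Bd w)

/-- `b` is a collider between consecutive neighbours `a` and `c`. -/
def Collider (a b c : V) : Prop := G.HeadAt a b ∧ G.HeadAt c b

/-- A path: a list of distinct vertices, consecutive ones adjacent. -/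
def IsPath (p : List V) : Prop := p.Nodup ∧ p.Chain' G.Adj

/-- `p` is an m-connecting path given `C`: every non-collider on it is
outside `C` and every collider on it is an ancestor of `C`. -/
def IsMConnPath (C : Set V) (p : List V) : Prop :=
  G.IsPath p ∧
  ∀ a b c, ConsecTriple p a b c →
    (G.Collider a b c → b ∈ G.anSet C) ∧ (¬ G.Collider a b c → b ∉ C)

/-- `v` and `w` are m-connected given `C`. -/
def MConn (v w : V) (C : Set V) : Prop :=
  ∃ p, G.IsMConnPath C p ∧ p.head? = some v ∧ p.getLast? = some w

/-- `v` and `w` are m-separated given `C`. -/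
def MSep (v w : V) (C : Set V) : Prop := ¬ G.MConn v w C

/-- A maximal (ancestral) graph: every pair of distinct non-adjacent
vertices is m-separated given some set. -/
def Maximal : Prop :=
  ∀ v w, v ≠ w → ¬ G.Adj v w → ∃ C : Set V, v ∉ C ∧ w ∉ C ∧ G.MSep v w C

/-- `G` is a bi-directed graph. -/
def Bidirected : Prop := ∀ v w, G.E v w = .none ∨ G.E v w = .bidir

/-- `G` is an undirected graph. -/
def UndirectedG : Prop := ∀ v w, G.E v w = .none ∨ G.E v w = .undir

/-- `G` is a directed acyclic graph. -/
def IsDAG : Prop :=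
  (∀ v w, G.E v w = .none ∨ G.E v w = .arrowTo ∨ G.E v w = .arrowFrom) ∧
  (∀ v w, G.Dir v w → ¬ G.Anc w v)

/-- `G` and `H` have the same skeleton. -/
def SameSkeleton (H : MixedGraph V) : Prop := ∀ v w, G.Adj v w ↔ H.Adj v w

/-- `G` and `H` are Markov equivalent: their m-separation relations
coincide. -/
def MarkovEquiv (H : MixedGraph V) : Prop :=
  ∀ v w (C : Set V), v ≠ w → v ∉ C → w ∉ C → (G.MSep v w C ↔ H.MSep v w C)

open Classical in
/-- The edge map obtained from `G` by dropping all arrowheads at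
simplicial vertices. -/
noncomputable def dropE (v w : V) : EType :=
  match G.E v w with
  | .none => .none
  | .undir => .undir
  | .arrowTo => if G.Simplicial w then .undir else .arrowTo
  | .arrowFrom => if G.Simplicial v then .undir else .arrowFrom
  | .bidir =>
      if G.Simplicial v then (if G.Simplicial w then .undir else .arrowTo)
      else (if G.Simplicial w then .arrowFrom else .bidir)

/-- The graph obtained from `G` by dropping all arrowheads at simplicial
vertices; for a bi-directed graph `G` this is the simplicial graph `Gˢ`. -/
noncomputable def drop : MixedGraph V where
  E := G.dropE
  no_loop v := by simp [dropE, G.no_loop]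
  symm v w := by
    unfold dropE
    rw [G.symm v w]
    cases h : G.E v w <;>
      simp only [EType.mirror] <;> split_ifs <;> simp_all [EType.mirror]

open Classical in
/-- The edge map of the minimally oriented graph `G^min_<`: starting from
the simplicial graph, each bi-directed edge `v ↔ w` with `Bd v ⊆ Bd w`
and `v < w` is replaced by `v → w`. -/
noncomputable def gminE [LinearOrder V] (v w : V) : EType :=
  match G.dropE v w with
  | .bidir =>
      if G.Bd v ⊆ G.Bd w ∧ v < w then .arrowTo
      else if G.Bd w ⊆ G.Bd v ∧ w < v then .arrowFrom
      else .bidir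
  | e => e

/-- The graph `G^min_<` produced by Algorithm 4.2 from `G` and the total
order on `V`. -/
noncomputable def gmin [LinearOrder V] : MixedGraph V where
  E := G.gminE
  no_loop v := by
    have h := G.drop.no_loop v
    simp only [drop] at h
    simp [gminE, h]
  symm v w := by
    have h := G.drop.symm v w
    simp only [drop] at h
    unfold gminE
    rw [h]
    cases hE : G.dropE v w <;> simp only [EType.mirror]
    case bidir =>
      by_cases c1 : G.Bd v ⊆ G.Bd w ∧ v < w
      · have c2 : ¬ (G.Bd w ⊆ G.Bd v ∧ w < v) := fun h' => lt_asymm c1.2 h'.2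
        simp [c1, c2, EType.mirror]
      · by_cases c2 : G.Bd w ⊆ G.Bd v ∧ w < v
        · simp [c1, c2, EType.mirror]
        · simp [c1, c2, EType.mirror]

/-- Total number of arrowheads of `G`: the number of directed edges plus
twice the number of bi-directed edges. -/
noncomputable def arr : ℕ :=
  {p : V × V | G.Dir p.1 p.2}.ncard + {p : V × V | G.Bidir p.1 p.2}.ncard

end MixedGraph

/-- `Gm` is a minimally oriented graph for `G`. -/
def MinOriented {V : Type} (G Gm : MixedGraph V) : Prop :=
  Gm.Ancestral ∧ Gm.Maximal ∧ G.MarkovEquiv Gm ∧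
  ∀ H : MixedGraph V, H.Ancestral → H.Maximal → G.MarkovEquiv H → Gm.arr ≤ H.arr

lemma aux_bidir_adj {V : Type} {G : MixedGraph V} (hG : G.Bidirected) {a b : V}
    (h : G.Adj a b) : G.E a b = .bidir := by
  rcases hG a b with h' | h' <;> simp_all [MixedGraph.Adj]

lemma aux_anSet_empty {V : Type} (G : MixedGraph V) : G.anSet ∅ = ∅ := by
  ext u; simp [MixedGraph.anSet]

lemma aux_bidir_msep_empty {V : Type} {G : MixedGraph V} (hG : G.Bidirected)
    {a b : V} (hab : a ≠ b) (hadj : ¬ G.Adj a b) : G.MSep a b ∅ := by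
  rintro ⟨p, ⟨⟨hnd, hch⟩, htr⟩, hhd, hlast⟩
  match p with
  | [] => simp at hhd
  | [a'] =>
      simp at hhd hlast
      exact hab (hhd ▸ hlast.symm ▸ rfl)
  | [a', b'] =>
      simp at hhd hlast hch
      subst hhd; subst hlast
      exact hadj (List.isChain_cons_cons.mp hch).1
  | a' :: b' :: c' :: rest =>
      have h1 : G.Adj a' b' := (List.isChain_cons_cons.mp hch).1
      have h2 : G.Adj b' c' := (List.isChain_cons_cons.mp (List.isChain_cons_cons.mp hch).2).1
      have hc : G.Collider a' b' c' := by
        refine ⟨Or.inr (aux_bidir_adj hG h1), Or.inr ?_⟩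
        have hbc := aux_bidir_adj hG h2
        rw [G.symm b' c', hbc]; rfl
      have := (htr a' b' c' ⟨[], rest, rfl⟩).1 hc
      rw [aux_anSet_empty] at this
      exact this

lemma aux_collider_of_msep {V : Type} {G : MixedGraph V} {a b c : V}
    (hab : a ≠ b) (hbc : b ≠ c) (hac : a ≠ c)
    (h1 : G.Adj a b) (h2 : G.Adj b c) (hsep : G.MSep a c ∅) :
    G.HeadAt a b ∧ G.HeadAt c b := by
  by_contra h
  apply hsep
  refine ⟨[a, b, c], ⟨⟨by simp [hab, hbc, hac], List.isChain_cons_cons.mpr ⟨h1, List.isChain_cons_cons.mpr ⟨h2, List.isChain_singleton _⟩⟩⟩, ?_⟩, rfl, rfl⟩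
  rintro a' b' c' ⟨l1, l2, heql⟩
  have hlen := congrArg List.length heql
  simp at hlen
  have hl1 : l1 = [] := by
    cases l1 with
    | nil => rfl
    | cons hd tl => simp at hlen; omega
  subst hl1
  simp at heql
  obtain ⟨ha, hb, hc, hl2⟩ := heql
  subst ha; subst hb; subst hc
  exact ⟨fun hcol => absurd hcol h, fun _ => by simp⟩

/-- If a bi-directed graph `G` contains, as an induced
subgraph on distinct vertices `{x, v, w, y}`, either the path
`x ↔ v ↔ w ↔ y` or the four-cycle `x ↔ v ↔ w ↔ y ↔ x`, then in every
ancestral graph Markov equivalent to `G` with the same skeleton the edge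
between `v` and `w` is bi-directed. -/
theorem stmt18 {V : Type} (G : MixedGraph V) (hG : G.Bidirected)
    (x v w y : V) (hnd : [x, v, w, y].Nodup)
    (hcase :
      (G.Adj x v ∧ G.Adj v w ∧ G.Adj w y ∧
        ¬ G.Adj x w ∧ ¬ G.Adj x y ∧ ¬ G.Adj v y) ∨
      (G.Adj x v ∧ G.Adj v w ∧ G.Adj w y ∧ G.Adj y x ∧
        ¬ G.Adj x w ∧ ¬ G.Adj v y))
    (Gb : MixedGraph V) (hanc : Gb.Ancestral) (hsk : G.SameSkeleton Gb)
    (heq : G.MarkovEquiv Gb) :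
    Gb.Bidir v w := by
  simp only [List.nodup_cons, List.mem_cons, List.mem_singleton, List.not_mem_nil,
    List.nodup_nil, and_true, not_or, or_false, not_false_iff] at hnd
  obtain ⟨⟨hxv, hxw, hxy⟩, ⟨hvw, hvy⟩, hwy⟩ := hnd
  have hAxv : G.Adj x v := by rcases hcase with h | h <;> exact h.1
  have hAvw : G.Adj v w := by rcases hcase with h | h <;> exact h.2.1
  have hAwy : G.Adj w y := by rcases hcase with h | h <;> exact h.2.2.1
  have hNxw : ¬ G.Adj x w := by
    rcases hcase with h | h
    · exact h.2.2.2.1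
    · exact h.2.2.2.2.1
  have hNvy : ¬ G.Adj v y := by
    rcases hcase with h | h
    · exact h.2.2.2.2.2
    · exact h.2.2.2.2.2
  have s1 : Gb.MSep x w ∅ :=
    (heq x w ∅ hxw (by simp) (by simp)).mp (aux_bidir_msep_empty hG hxw hNxw)
  have s2 : Gb.MSep v y ∅ :=
    (heq v y ∅ hvy (by simp) (by simp)).mp (aux_bidir_msep_empty hG hvy hNvy)
  have a1 : Gb.Adj x v := (hsk x v).mp hAxv
  have a2 : Gb.Adj v w := (hsk v w).mp hAvw
  have a3 : Gb.Adj w y := (hsk w y).mp hAwy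
  have c1 := aux_collider_of_msep hxv hvw hxw a1 a2 s1
  have c2 := aux_collider_of_msep hvw hwy hvy a2 a3 s2
  have hm := Gb.symm v w
  rcases c2.1 with h | h <;> rcases c1.2 with h' | h' <;>
    simp_all [MixedGraph.Bidir, EType.mirror]
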